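/- arXiv:1903.06013 — 3 statements merged into one kernel-verified Lean document; each statement's English description precedes it below -/
import Mathlib

section
/- For all distinct points x, y in ℝ³, one has 1/|x-y| = (1/π) ∫₀^∞ ∫_{ℝ³} r^{-5} 𝟙_{|x-z|≤r} 𝟙_{|y-z|≤r} dz dr, where 𝟙_{|x-z|≤r} denotes the indicator function of the closed ball of radius r centered at x. -/
open MeasureTheory Set Real

lemma disc_vol (c : ℝ) :
    volume {w : Fin 2 → ℝ | (w 0)^2 + (w 1)^2 ≤ c} = ENNReal.ofReal (π * c) := by
  rcases le_or_gt 0 c with hc | hc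
  · have h1 : {w : Fin 2 → ℝ | (w 0)^2 + (w 1)^2 ≤ c}
        = (MeasurableEquiv.toLp 2 (Fin 2 → ℝ)).symm.symm ⁻¹' (Metric.closedBall 0 (Real.sqrt c)) := by
      ext w
      simp only [Set.mem_setOf_eq, Set.mem_preimage, Metric.mem_closedBall, dist_zero_right,
        EuclideanSpace.norm_eq, Fin.sum_univ_two, Real.norm_eq_abs, sq_abs]
      rw [show ((MeasurableEquiv.toLp 2 (Fin 2 → ℝ)).symm.symm w : EuclideanSpace ℝ (Fin 2)) 0 = w 0 from rfl,
        show ((MeasurableEquiv.toLp 2 (Fin 2 → ℝ)).symm.symm w : EuclideanSpace ℝ (Fin 2)) 1 = w 1 from rfl]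
      rw [Real.sqrt_le_sqrt_iff hc]
    rw [h1, (MeasurePreserving.symm _ (EuclideanSpace.volume_preserving_symm_measurableEquiv_toLp (Fin 2))).measure_preimage
      measurableSet_closedBall.nullMeasurableSet,
      EuclideanSpace.volume_closedBall]
    have hcard : Fintype.card (Fin 2) = 2 := by simp
    rw [hcard]
    rw [show Real.sqrt π ^ 2 / Real.Gamma ((2:ℕ) / 2 + 1) = π by
      rw [Real.sq_sqrt Real.pi_pos.le]; norm_num [Real.Gamma_two]]
    rw [← ENNReal.ofReal_pow (Real.sqrt_nonneg c), Real.sq_sqrt hc, ← ENNReal.ofReal_mul hc]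
    rw [mul_comm]
  · have h0 : {w : Fin 2 → ℝ | (w 0)^2 + (w 1)^2 ≤ c} = ∅ := by
      ext w; simp only [Set.mem_setOf_eq, Set.mem_empty_iff_false, iff_false, not_le]
      nlinarith [sq_nonneg (w 0), sq_nonneg (w 1)]
    rw [h0, measure_empty, Eq.comm, ENNReal.ofReal_eq_zero]
    nlinarith [Real.pi_pos]

lemma lens_f_integrable (d r : ℝ) (hr0 : 0 ≤ r) :
    Integrable (fun t : ℝ => π * max (r^2 - max (t^2) ((t-d)^2)) 0) volume := by
  have hcont : Continuous (fun t : ℝ => π * max (r^2 - max (t^2) ((t-d)^2)) 0) := by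
    apply Continuous.mul continuous_const
    exact ((continuous_const.sub ((continuous_pow 2).max
      (((continuous_id.sub continuous_const).pow 2)))).max continuous_const)
  have hsupp : ∀ t, t ∉ Icc (-r) r → π * max (r^2 - max (t^2) ((t-d)^2)) 0 = 0 := by
    intro t ht
    simp only [mem_Icc, not_and_or, not_le] at ht
    have h2 : r^2 < t^2 := by
      rcases ht with h | h
      · nlinarith
      · nlinarith
    have hneg : r^2 - max (t^2) ((t-d)^2) < 0 := by
      have := le_max_left (t^2) ((t-d)^2); nlinarith
    simp [max_eq_right hneg.le]
  exact hcont.integrable_of_hasCompactSupport (HasCompactSupport.intro isCompact_Icc hsupp)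


lemma antideriv_right (r d t : ℝ) :
    HasDerivAt (fun t => π * (r^2*t - t^3/3)) (π * (r^2 - t^2)) t := by
  have h1 : HasDerivAt (fun t : ℝ => r^2*t - t^3/3) (r^2 - t^2) t := by
    have := ((hasDerivAt_id t).const_mul (r^2)).sub ((hasDerivAt_pow 3 t).div_const 3)
    exact this.congr_deriv (by simp)
  exact h1.const_mul π

lemma antideriv_left (r d t : ℝ) :
    HasDerivAt (fun t => π * (r^2*t - (t-d)^3/3)) (π * (r^2 - (t-d)^2)) t := by
  have h1 : HasDerivAt (fun t : ℝ => r^2*t - (t-d)^3/3) (r^2 - (t-d)^2) t := by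
    have h2 : HasDerivAt (fun t : ℝ => (t-d)^3) (3*(t-d)^2) t := by
      have := (hasDerivAt_pow 3 (t-d)).comp t ((hasDerivAt_id t).sub_const d)
      exact this.congr_deriv (by simp)
    have := ((hasDerivAt_id t).const_mul (r^2)).sub (h2.div_const 3)
    exact this.congr_deriv (by simp)
  exact h1.const_mul π

lemma lens1d (d r : ℝ) (hd : 0 < d) (hr : d/2 ≤ r) :
    ∫ t : ℝ, π * max (r^2 - max (t^2) ((t-d)^2)) 0
      = π * (4/3*r^3 - d*r^2 + d^3/12) := by
  have hr0 : 0 < r := lt_of_lt_of_le (by linarith) hr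
  set f : ℝ → ℝ := fun t => π * max (r^2 - max (t^2) ((t-d)^2)) 0 with hf
  have hint : Integrable f := lens_f_integrable d r hr0.le
  rw [← intervalIntegral.integral_Iic_add_Ioi (b := d/2) hint.integrableOn hint.integrableOn]
  -- right piece
  have hright : ∫ t in Ioi (d/2), f t = π * (2/3*r^3 - d/2*r^2 + d^3/24) := by
    have he : EqOn f (fun t => π * max (r^2 - t^2) 0) (Ioi (d/2)) := by
      intro t ht
      simp only [mem_Ioi] at ht
      have : max (t^2) ((t-d)^2) = t^2 := max_eq_left (by nlinarith)
      simp [hf, this]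
    rw [setIntegral_congr_fun measurableSet_Ioi he]
    rw [← Ioc_union_Ioi_eq_Ioi hr]
    have hg : Continuous (fun t : ℝ => π * max (r^2 - t^2) 0) := by
      apply Continuous.mul continuous_const
      exact (continuous_const.sub (continuous_pow 2)).max continuous_const
    have hgcs : HasCompactSupport (fun t : ℝ => π * max (r^2 - t^2) 0) := by
      apply HasCompactSupport.intro (isCompact_Icc (a := -r) (b := r))
      intro t ht
      simp only [mem_Icc, not_and_or, not_le] at ht
      have h2 : r^2 - t^2 < 0 := by rcases ht with h | h <;> nlinarith
      simp [max_eq_right h2.le]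
    have hgint : Integrable (fun t : ℝ => π * max (r^2 - t^2) 0) volume := hg.integrable_of_hasCompactSupport hgcs
    rw [setIntegral_union (Ioc_disjoint_Ioi le_rfl) measurableSet_Ioi
      hgint.integrableOn hgint.integrableOn]
    have hz : ∫ t in Ioi r, π * max (r^2 - t^2) 0 = 0 := by
      apply setIntegral_eq_zero_of_forall_eq_zero
      intro t ht
      simp only [mem_Ioi] at ht
      have : r^2 - t^2 < 0 := by nlinarith
      simp [max_eq_right this.le]
    rw [hz, add_zero]
    have he2 : EqOn (fun t : ℝ => π * max (r^2 - t^2) 0)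
        (fun t : ℝ => π * (r^2 - t^2)) (Ioc (d/2) r) := by
      intro t ht
      simp only [mem_Ioc] at ht
      have : 0 ≤ r^2 - t^2 := by nlinarith
      simp [max_eq_left this]
    rw [setIntegral_congr_fun measurableSet_Ioc he2,
      ← intervalIntegral.integral_of_le hr]
    rw [intervalIntegral.integral_eq_sub_of_hasDerivAt
      (fun t _ => antideriv_right r d t)
      ((continuous_const.mul (continuous_const.sub (continuous_pow 2))).intervalIntegrable _ _)]
    ring
  -- left piece
  have hleft : ∫ t in Iic (d/2), f t = π * (2/3*r^3 - d/2*r^2 + d^3/24) := by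
    have he : EqOn f (fun t => π * max (r^2 - (t-d)^2) 0) (Iic (d/2)) := by
      intro t ht
      simp only [mem_Iic] at ht
      have : max (t^2) ((t-d)^2) = (t-d)^2 := max_eq_right (by nlinarith)
      simp [hf, this]
    rw [setIntegral_congr_fun measurableSet_Iic he]
    have hsplit : Iic (d/2) = Iic (d-r) ∪ Ioc (d-r) (d/2) := by
      rw [Iic_union_Ioc_eq_Iic (by linarith)]
    rw [hsplit]
    have hg : Continuous (fun t : ℝ => π * max (r^2 - (t-d)^2) 0) := by
      apply Continuous.mul continuous_const
      exact (continuous_const.sub ((continuous_id.sub continuous_const).pow 2)).max continuous_const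
    have hgcs : HasCompactSupport (fun t : ℝ => π * max (r^2 - (t-d)^2) 0) := by
      apply HasCompactSupport.intro (isCompact_Icc (a := d-r) (b := d+r))
      intro t ht
      simp only [mem_Icc, not_and_or, not_le] at ht
      have h2 : r^2 - (t-d)^2 < 0 := by rcases ht with h | h <;> nlinarith
      simp [max_eq_right h2.le]
    have hgint : Integrable (fun t : ℝ => π * max (r^2 - (t-d)^2) 0) volume := hg.integrable_of_hasCompactSupport hgcs
    rw [setIntegral_union (Iic_disjoint_Ioc le_rfl) measurableSet_Ioc
      hgint.integrableOn hgint.integrableOn]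
    have hz : ∫ t in Iic (d-r), π * max (r^2 - (t-d)^2) 0 = 0 := by
      apply setIntegral_eq_zero_of_forall_eq_zero
      intro t ht
      simp only [mem_Iic] at ht
      have : r^2 - (t-d)^2 ≤ 0 := by nlinarith
      simp [max_eq_right this]
    rw [hz, zero_add]
    have he2 : EqOn (fun t : ℝ => π * max (r^2 - (t-d)^2) 0)
        (fun t : ℝ => π * (r^2 - (t-d)^2)) (Ioc (d-r) (d/2)) := by
      intro t ht
      simp only [mem_Ioc] at ht
      have : 0 ≤ r^2 - (t-d)^2 := by nlinarith
      simp [max_eq_left this]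
    rw [setIntegral_congr_fun measurableSet_Ioc he2,
      ← intervalIntegral.integral_of_le (by linarith)]
    rw [intervalIntegral.integral_eq_sub_of_hasDerivAt
      (fun t _ => antideriv_left r d t)
      ((continuous_const.mul (continuous_const.sub
        ((continuous_id.sub continuous_const).pow 2))).intervalIntegrable _ _)]
    ring
  rw [hleft, hright]; ring




lemma lens_vol0 (d r : ℝ) (hd : 0 < d) (hr : d/2 ≤ r) :
    volume (Metric.closedBall (0 : EuclideanSpace ℝ (Fin 3)) r ∩
      Metric.closedBall (EuclideanSpace.single 0 d) r)
      = ENNReal.ofReal (π * (4/3*r^3 - d*r^2 + d^3/12)) := by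
  have hr0 : (0:ℝ) ≤ r := le_trans (by linarith) hr
  set S := Metric.closedBall (0 : EuclideanSpace ℝ (Fin 3)) r ∩
      Metric.closedBall (EuclideanSpace.single 0 d) r with hS
  set B : Set (ℝ × (Fin 2 → ℝ)) :=
    {p | (p.2 0)^2 + (p.2 1)^2 ≤ r^2 - max (p.1^2) ((p.1-d)^2)} with hB
  have hBm : MeasurableSet B := by
    apply measurableSet_le
    · fun_prop
    · fun_prop
  have hAeq : (MeasurableEquiv.toLp 2 (Fin 3 → ℝ)).symm.symm ⁻¹' S
      = (MeasurableEquiv.piFinSuccAbove (fun _ : Fin 3 => ℝ) 0) ⁻¹' B := by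
    ext w
    simp only [Set.mem_preimage, hS, Set.mem_inter_iff, Metric.mem_closedBall,
      Metric.mem_closedBall, hB, Set.mem_setOf_eq]
    have hc0 : ((MeasurableEquiv.toLp 2 (Fin 3 → ℝ)).symm.symm w : EuclideanSpace ℝ (Fin 3)) = fun i => w i := rfl
    rw [dist_zero_right, EuclideanSpace.dist_eq, EuclideanSpace.norm_eq]
    simp only [hc0, Fin.sum_univ_three, Real.norm_eq_abs, sq_abs, Real.dist_eq]
    rw [EuclideanSpace.single_apply, EuclideanSpace.single_apply, EuclideanSpace.single_apply]
    norm_num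
    have e1 : (MeasurableEquiv.piFinSuccAbove (fun _ : Fin 3 => ℝ) 0 w).1 = w 0 := rfl
    have e2 : (MeasurableEquiv.piFinSuccAbove (fun _ : Fin 3 => ℝ) 0 w).2 0 = w 1 := rfl
    have e3 : (MeasurableEquiv.piFinSuccAbove (fun _ : Fin 3 => ℝ) 0 w).2 1 = w 2 := rfl
    have t1 : Fin.tail w 0 = w 1 := rfl
    have t2 : Fin.tail w 1 = w 2 := rfl
    rw [t1, t2, if_neg (by decide : ¬(2:Fin 3) = 0), Real.sqrt_le_iff, Real.sqrt_le_iff]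
    rcases le_total ((w 0)^2) ((w 0 - d)^2) with hmax | hmax
    · rw [max_eq_right hmax]
      constructor
      · rintro ⟨⟨-, h1⟩, ⟨-, h2⟩⟩; nlinarith
      · intro h; exact ⟨⟨hr0, by nlinarith⟩, ⟨hr0, by nlinarith⟩⟩
    · rw [max_eq_left hmax]
      constructor
      · rintro ⟨⟨-, h1⟩, ⟨-, h2⟩⟩; nlinarith
      · intro h; exact ⟨⟨hr0, by nlinarith⟩, ⟨hr0, by nlinarith⟩⟩
  have hSm : MeasurableSet S := measurableSet_closedBall.inter measurableSet_closedBall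
  have h1 : volume S = volume ((MeasurableEquiv.toLp 2 (Fin 3 → ℝ)).symm.symm ⁻¹' S) :=
    ((MeasurePreserving.symm _ (EuclideanSpace.volume_preserving_symm_measurableEquiv_toLp (Fin 3))).measure_preimage
      hSm.nullMeasurableSet).symm
  rw [h1, hAeq]
  have h2 := (measurePreserving_piFinSuccAbove (fun _ : Fin 3 => (volume : Measure ℝ)) 0).measure_preimage
    hBm.nullMeasurableSet
  rw [← volume_pi] at h2
  rw [h2, Measure.prod_apply hBm]
  have h3 : ∀ t : ℝ, (Prod.mk t ⁻¹' B)
      = {w : Fin 2 → ℝ | (w 0)^2 + (w 1)^2 ≤ r^2 - max (t^2) ((t-d)^2)} := fun t => rfl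
  have h5 : ∀ t : ℝ, volume (Prod.mk t ⁻¹' B)
      = ENNReal.ofReal (π * max (r^2 - max (t^2) ((t-d)^2)) 0) := by
    intro t
    rw [h3 t, disc_vol]
    rcases le_total (r^2 - max (t^2) ((t-d)^2)) 0 with h | h
    · rw [max_eq_right h, mul_zero, ENNReal.ofReal_zero, ENNReal.ofReal_eq_zero]
      nlinarith [Real.pi_pos]
    · rw [max_eq_left h]
  simp only [← volume_pi]
  rw [lintegral_congr h5,
    ← ofReal_integral_eq_lintegral_ofReal (lens_f_integrable d r hr0)
      (Filter.Eventually.of_forall fun t => mul_nonneg Real.pi_pos.le (le_max_right _ _)),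
    lens1d d r hd hr]


lemma lens_vol (x y : EuclideanSpace ℝ (Fin 3)) (r : ℝ) (hxy : x ≠ y)
    (hr : ‖x - y‖/2 ≤ r) :
    volume (Metric.closedBall x r ∩ Metric.closedBall y r)
      = ENNReal.ofReal (π * (4/3*r^3 - ‖x - y‖*r^2 + ‖x - y‖^3/12)) := by
  set d : ℝ := ‖x - y‖ with hdd
  have hd : 0 < d := by rw [hdd]; exact norm_sub_pos_iff.mpr hxy
  have hd' : ‖y - x‖ = d := by rw [hdd, norm_sub_rev]
  set u : EuclideanSpace ℝ (Fin 3) := ‖y - x‖⁻¹ • (y - x) with hu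
  have hu1 : ‖u‖ = 1 := by
    rw [hu, norm_smul, norm_inv, norm_norm, hd', inv_mul_cancel₀ hd.ne']
  have hortho : Orthonormal ℝ (Set.restrict ({0} : Set (Fin 3)) (fun _ : Fin 3 => u)) := by
    constructor
    · intro i; exact hu1
    · intro i j hij
      exact absurd (Subtype.ext ((Set.mem_singleton_iff.mp i.2).trans
        (Set.mem_singleton_iff.mp j.2).symm)) hij
  obtain ⟨b, hb⟩ := hortho.exists_orthonormalBasis_extension_of_card_eq
    (by simp [finrank_euclideanSpace])
  have hb0 : b 0 = u := hb 0 rfl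
  have hyx : y - x = d • u := by
    rw [hu, smul_smul, hd', mul_inv_cancel₀ hd.ne', one_smul]
  have hrepr : b.repr (y - x) = EuclideanSpace.single 0 d := by
    rw [hyx, _root_.map_smul, ← hb0, OrthonormalBasis.repr_self]
    ext i
    rw [PiLp.smul_apply, EuclideanSpace.single_apply, EuclideanSpace.single_apply]
    by_cases h : i = 0 <;> simp [h]
  have hkey : Metric.closedBall x r ∩ Metric.closedBall y r
      = (fun z => b.repr (z - x)) ⁻¹' (Metric.closedBall (0 : EuclideanSpace ℝ (Fin 3)) r ∩
          Metric.closedBall (EuclideanSpace.single 0 d) r) := by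
    ext z
    simp only [Set.mem_inter_iff, Metric.mem_closedBall, Set.mem_preimage]
    rw [← hrepr]
    rw [dist_zero_right, b.repr.norm_map, dist_eq_norm, dist_eq_norm, dist_eq_norm,
      ← map_sub, b.repr.norm_map]
    have : z - x - (y - x) = z - y := by abel
    rw [this]
  rw [hkey]
  have hmp : MeasurePreserving (fun z : EuclideanSpace ℝ (Fin 3) => b.repr (z - x))
      volume volume :=
    b.measurePreserving_repr.comp (measurePreserving_sub_right volume x)
  rw [hmp.measure_preimage ((measurableSet_closedBall.inter
    measurableSet_closedBall).nullMeasurableSet)]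
  exact lens_vol0 d r hd hr


lemma rpow_neg_nat (a : ℝ) (ha : 0 ≤ a) (n : ℕ) : a ^ (-(n:ℝ)) = (a^n)⁻¹ := by
  rw [Real.rpow_neg ha, ← Real.rpow_natCast a n]

/-- Fefferman–de la Llave representation of the Coulomb potential. -/
theorem stmt0 (x y : EuclideanSpace ℝ (Fin 3)) (hxy : x ≠ y) :
    1 / ‖x - y‖ =
      (1 / Real.pi) *
        ∫ r in Set.Ioi (0 : ℝ), ∫ z : EuclideanSpace ℝ (Fin 3),
          r ^ (-5 : ℤ) * (Metric.closedBall x r).indicator (fun _ => (1 : ℝ)) z *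
            (Metric.closedBall y r).indicator (fun _ => (1 : ℝ)) z := by
  have hd : 0 < ‖x - y‖ := norm_sub_pos_iff.mpr hxy
  set d : ℝ := ‖x - y‖ with hdd
  have hhalf : 0 < d/2 := by linarith
  -- inner integral evaluation
  have hinner : ∀ r ∈ Ioi (0:ℝ), (∫ z : EuclideanSpace ℝ (Fin 3),
      r ^ (-5 : ℤ) * (Metric.closedBall x r).indicator (fun _ => (1 : ℝ)) z *
        (Metric.closedBall y r).indicator (fun _ => (1 : ℝ)) z)
      = r ^ (-5 : ℤ) * (if d/2 ≤ r then π * (4/3*r^3 - d*r^2 + d^3/12) else 0) := by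
    intro r hr
    simp only [mem_Ioi] at hr
    have hind : ∀ z, (Metric.closedBall x r).indicator (fun _ => (1 : ℝ)) z *
        (Metric.closedBall y r).indicator (fun _ => (1 : ℝ)) z
        = (Metric.closedBall x r ∩ Metric.closedBall y r).indicator (fun _ => (1:ℝ)) z := by
      intro z
      by_cases h1 : z ∈ Metric.closedBall x r <;> by_cases h2 : z ∈ Metric.closedBall y r <;>
        simp [Set.indicator_apply, h1, h2, Set.mem_inter_iff]
    simp_rw [mul_assoc, hind]
    rw [MeasureTheory.integral_const_mul]
    have hvol : (∫ z : EuclideanSpace ℝ (Fin 3),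
        (Metric.closedBall x r ∩ Metric.closedBall y r).indicator (fun _ => (1:ℝ)) z)
        = (volume (Metric.closedBall x r ∩ Metric.closedBall y r)).toReal := by
      rw [integral_indicator (measurableSet_closedBall.inter measurableSet_closedBall)]
      simp [Measure.restrict_apply, Measure.real]
    rw [hvol]
    congr 1
    rcases le_or_gt (d/2) r with hcase | hcase
    · rw [lens_vol x y r hxy hcase, ← hdd, if_pos hcase, ENNReal.toReal_ofReal]
      have h1 : 0 ≤ d*(r - d/2)^2 + 4/3*(r - d/2)^3 := by
        have := mul_nonneg hd.le (sq_nonneg (r - d/2))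
        have := pow_nonneg (sub_nonneg.mpr hcase) 3
        nlinarith
      have h2 : (0:ℝ) ≤ 4/3*r^3 - d*r^2 + d^3/12 := by nlinarith
      exact mul_nonneg Real.pi_pos.le h2
    · have hdxy : dist x y = d := by rw [dist_eq_norm, ← hdd]
      have hemp : Metric.closedBall x r ∩ Metric.closedBall y r = ∅ := by
        rw [Set.eq_empty_iff_forall_notMem]
        rintro z ⟨h1, h2⟩
        rw [Metric.mem_closedBall] at h1 h2
        have htri : dist x y ≤ dist z x + dist z y := by
          rw [dist_comm z x]; exact dist_triangle x z y
        rw [hdxy] at htri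
        linarith
      rw [hemp, if_neg (not_le.mpr hcase)]
      simp
  rw [setIntegral_congr_fun measurableSet_Ioi hinner]
  -- outer integral
  set h2 : ℝ → ℝ := fun r => (4*π/3) * r^(-2:ℝ) + (-(π*d)) * r^(-3:ℝ) + (π*d^3/12) * r^(-5:ℝ)
    with hh2
  have heq2 : ∀ r ∈ Ioi (d/2),
      r ^ (-5 : ℤ) * (if d/2 ≤ r then π * (4/3*r^3 - d*r^2 + d^3/12) else 0) = h2 r := by
    intro r hr
    simp only [mem_Ioi] at hr
    have hr0 : 0 < r := lt_trans hhalf hr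
    rw [if_pos hr.le]
    simp only [hh2]
    have e2 : r ^ (-2:ℝ) = (r^2)⁻¹ := by
      rw [show (-2:ℝ) = -((2:ℕ):ℝ) by norm_num]; exact rpow_neg_nat r hr0.le 2
    have e3 : r ^ (-3:ℝ) = (r^3)⁻¹ := by
      rw [show (-3:ℝ) = -((3:ℕ):ℝ) by norm_num]; exact rpow_neg_nat r hr0.le 3
    have e5 : r ^ (-5:ℝ) = (r^5)⁻¹ := by
      rw [show (-5:ℝ) = -((5:ℕ):ℝ) by norm_num]; exact rpow_neg_nat r hr0.le 5
    rw [e2, e3, e5, zpow_neg, show ((5:ℤ)) = ((5:ℕ):ℤ) by norm_num, zpow_natCast]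
    field_simp
    ring
  have hint2 : IntegrableOn h2 (Ioi (d/2)) volume := by
    apply Integrable.add
    apply Integrable.add
    · exact (integrableOn_Ioi_rpow_of_lt (by norm_num) hhalf).const_mul _
    · exact (integrableOn_Ioi_rpow_of_lt (by norm_num) hhalf).const_mul _
    · exact (integrableOn_Ioi_rpow_of_lt (by norm_num) hhalf).const_mul _
  have hzero : ∀ r ∈ Ioc 0 (d/2),
      r ^ (-5 : ℤ) * (if d/2 ≤ r then π * (4/3*r^3 - d*r^2 + d^3/12) else 0) = 0 := by
    intro r hr
    simp only [mem_Ioc] at hr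
    rcases lt_or_eq_of_le hr.2 with h | h
    · rw [if_neg (not_le.mpr h), mul_zero]
    · rw [h, if_pos le_rfl]
      have hz : π * (4/3*(d/2)^3 - d*(d/2)^2 + d^3/12) = 0 := by ring
      rw [hz, mul_zero]
  rw [← Ioc_union_Ioi_eq_Ioi hhalf.le,
    setIntegral_union (Ioc_disjoint_Ioi le_rfl) measurableSet_Ioi
      ((integrableOn_congr_fun hzero measurableSet_Ioc).mpr (integrableOn_zero))
      ((integrableOn_congr_fun heq2 measurableSet_Ioi).mpr hint2),
    setIntegral_eq_zero_of_forall_eq_zero hzero, zero_add,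
    setIntegral_congr_fun measurableSet_Ioi heq2]
  have hA : IntegrableOn (fun r : ℝ => (4*π/3) * r^(-2:ℝ)) (Ioi (d/2)) volume :=
    (integrableOn_Ioi_rpow_of_lt (by norm_num) hhalf).const_mul _
  have hB : IntegrableOn (fun r : ℝ => (-(π*d)) * r^(-3:ℝ)) (Ioi (d/2)) volume :=
    (integrableOn_Ioi_rpow_of_lt (by norm_num) hhalf).const_mul _
  have hC : IntegrableOn (fun r : ℝ => (π*d^3/12) * r^(-5:ℝ)) (Ioi (d/2)) volume :=
    (integrableOn_Ioi_rpow_of_lt (by norm_num) hhalf).const_mul _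
  have hAB : IntegrableOn (fun r : ℝ => (4*π/3) * r^(-2:ℝ) + (-(π*d)) * r^(-3:ℝ))
      (Ioi (d/2)) volume := hA.add hB
  simp only [hh2]
  rw [integral_add hAB hC, integral_add hA hB,
    MeasureTheory.integral_const_mul, MeasureTheory.integral_const_mul,
    MeasureTheory.integral_const_mul,
    integral_Ioi_rpow_of_lt (by norm_num) hhalf,
    integral_Ioi_rpow_of_lt (by norm_num) hhalf,
    integral_Ioi_rpow_of_lt (by norm_num) hhalf]
  have c1 : (-2:ℝ) + 1 = -1 := by norm_num
  have c2 : (-3:ℝ) + 1 = -2 := by norm_num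
  have c5 : (-5:ℝ) + 1 = -4 := by norm_num
  rw [c1, c2, c5]
  have e1 : (d/2) ^ (-1:ℝ) = (d/2)⁻¹ := by
    rw [show (-1:ℝ) = -((1:ℕ):ℝ) by norm_num, rpow_neg_nat _ hhalf.le 1, pow_one]
  have e2 : (d/2) ^ (-2:ℝ) = ((d/2)^2)⁻¹ := by
    rw [show (-2:ℝ) = -((2:ℕ):ℝ) by norm_num]; exact rpow_neg_nat _ hhalf.le 2
  have e4 : (d/2) ^ (-4:ℝ) = ((d/2)^4)⁻¹ := by
    rw [show (-4:ℝ) = -((4:ℕ):ℝ) by norm_num]; exact rpow_neg_nat _ hhalf.le 4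
  rw [e1, e2, e4]
  have hπ : π ≠ 0 := Real.pi_ne_zero
  field_simp
  ring
end

section
/- For all distinct x, y in ℝ³, one has 1/|x-y| = (4/π²) ∫₀^∞ ∫_{ℝ³} r^{-5} exp(-|x-z|²/r²) exp(-|y-z|²/r²) dz dr. -/
open MeasureTheory

lemma gauss_aux (n : ℕ) (b : ℝ) (hb : 0 < b) (m : EuclideanSpace ℝ (Fin n)) :
    ∫ z : EuclideanSpace ℝ (Fin n), Real.exp (-b * ‖z - m‖ ^ 2)
      = (Real.pi / b) ^ ((n : ℝ) / 2) := by
  rw [integral_sub_right_eq_self (fun z : EuclideanSpace ℝ (Fin n) => Real.exp (-b * ‖z‖ ^ 2)) m]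
  rw [GaussianFourier.integral_rexp_neg_mul_sq_norm hb]
  simp

/-- Smooth (Gaussian) Fefferman–de la Llave representation of the Coulomb potential. -/
theorem stmt1 (x y : EuclideanSpace ℝ (Fin 3)) (hxy : x ≠ y) :
    1 / ‖x - y‖ =
      (4 / Real.pi ^ 2) *
        ∫ r in Set.Ioi (0 : ℝ), ∫ z : EuclideanSpace ℝ (Fin 3),
          r ^ (-5 : ℤ) * Real.exp (-‖x - z‖ ^ 2 / r ^ 2) * Real.exp (-‖y - z‖ ^ 2 / r ^ 2) := by
  have hd : (0:ℝ) < ‖x - y‖ := by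
    rw [norm_pos_iff, sub_ne_zero]; exact hxy
  set d : ℝ := ‖x - y‖ with hdd
  set m : EuclideanSpace ℝ (Fin 3) := (2:ℝ)⁻¹ • (x + y) with hm
  -- inner integral
  have hinner : ∀ r ∈ Set.Ioi (0:ℝ),
      (∫ z : EuclideanSpace ℝ (Fin 3),
          r ^ (-5 : ℤ) * Real.exp (-‖x - z‖ ^ 2 / r ^ 2) * Real.exp (-‖y - z‖ ^ 2 / r ^ 2))
        = (Real.pi/2) ^ ((3:ℝ)/2) *
            ((|(-1:ℝ)| * r ^ ((-1:ℝ) - 1)) • Real.exp (-(d^2/2) * (r ^ (-1:ℝ)) ^ 2)) := by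
    intro r hr
    have hr0 : (0:ℝ) < r := hr
    have hrne : r ≠ 0 := ne_of_gt hr0
    have hpt : ∀ z : EuclideanSpace ℝ (Fin 3),
        r ^ (-5 : ℤ) * Real.exp (-‖x - z‖ ^ 2 / r ^ 2) * Real.exp (-‖y - z‖ ^ 2 / r ^ 2)
          = (r ^ (-5 : ℤ) * Real.exp (-(d^2/2) / r ^ 2)) *
              Real.exp (-(2 / r ^ 2) * ‖z - m‖ ^ 2) := by
      intro z
      have key : ‖x - z‖ ^ 2 + ‖y - z‖ ^ 2 = 2 * ‖z - m‖ ^ 2 + d ^ 2 / 2 := by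
        have par := parallelogram_law_with_norm ℝ (x - z) (y - z)
        have h1 : (x - z) + (y - z) = (2:ℝ) • (m - z) := by
          rw [hm]; module
        have h2 : (x - z) - (y - z) = x - y := by abel
        rw [h1, h2, norm_smul] at par
        have h3 : ‖m - z‖ = ‖z - m‖ := norm_sub_rev _ _
        rw [h3] at par
        simp only [Real.norm_ofNat] at par
        nlinarith [par]
      rw [mul_assoc, mul_assoc, ← Real.exp_add, ← Real.exp_add]
      have hexp : -‖x - z‖ ^ 2 / r ^ 2 + -‖y - z‖ ^ 2 / r ^ 2
          = -(d ^ 2 / 2) / r ^ 2 + -(2 / r ^ 2) * ‖z - m‖ ^ 2 := by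
        linear_combination (-1 / r ^ 2) * key
      rw [hexp]
    rw [integral_congr_ae (Filter.Eventually.of_forall hpt), integral_const_mul,
      gauss_aux 3 (2 / r ^ 2) (by positivity) m]
    simp only [Nat.cast_ofNat]
    have h4 : Real.pi / (2 / r ^ 2) = (Real.pi / 2) * r ^ 2 := by field_simp
    rw [h4, Real.mul_rpow (by positivity) (by positivity)]
    have h5 : ((r:ℝ) ^ 2) ^ ((3:ℝ)/2) = r ^ (3:ℕ) := by
      rw [← Real.rpow_natCast r 2, ← Real.rpow_mul hr0.le, ← Real.rpow_natCast r 3]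
      norm_num
    have h6 : r ^ ((-1:ℝ) - 1) = r ^ (-2 : ℤ) := by
      rw [← Real.rpow_intCast r (-2)]; norm_num
    have h7 : (r ^ (-1:ℝ)) = r⁻¹ := Real.rpow_neg_one r
    have h8 : -(d ^ 2 / 2) * (r⁻¹) ^ 2 = -(d^2/2) / r ^ 2 := by
      field_simp
    rw [h5, h6, h7, h8, smul_eq_mul, abs_neg, abs_one, one_mul]
    have h10 : r ^ (-5 : ℤ) * r ^ (3 : ℕ) = r ^ (-2 : ℤ) := by
      rw [← zpow_natCast r 3, ← zpow_add₀ hrne]; norm_num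
    generalize (Real.pi / 2 : ℝ) ^ ((3:ℝ)/2) = C
    linear_combination C * Real.exp (-(d ^ 2 / 2) / r ^ 2) * h10
  rw [setIntegral_congr_fun measurableSet_Ioi hinner, integral_const_mul,
    integral_comp_rpow_Ioi (fun u => Real.exp (-(d^2/2) * u ^ 2)) (by norm_num : (-1:ℝ) ≠ 0),
    integral_gaussian_Ioi (d^2/2)]
  have h9 : Real.sqrt (Real.pi / (d ^ 2 / 2)) = Real.sqrt (2 * Real.pi) / d := by
    rw [show Real.pi / (d ^ 2 / 2) = (2 * Real.pi) / d ^ 2 by field_simp,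
      Real.sqrt_div (by positivity), Real.sqrt_sq hd.le]
  rw [h9]
  have hA : (Real.pi / 2) ^ ((3:ℝ)/2) * Real.sqrt (2 * Real.pi) = Real.pi ^ 2 / 2 := by
    have hA1 : ((Real.pi / 2) ^ ((3:ℝ)/2)) ^ 2 = (Real.pi / 2) ^ (3:ℕ) := by
      rw [← Real.rpow_natCast ((Real.pi / 2) ^ ((3:ℝ)/2)) 2, ← Real.rpow_mul (by positivity),
        ← Real.rpow_natCast (Real.pi / 2) 3]
      norm_num
    have hA2 : (Real.sqrt (2 * Real.pi)) ^ 2 = 2 * Real.pi :=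
      Real.sq_sqrt (by positivity)
    have hpos : (0:ℝ) ≤ (Real.pi / 2) ^ ((3:ℝ)/2) * Real.sqrt (2 * Real.pi) := by positivity
    have hsq : ((Real.pi / 2) ^ ((3:ℝ)/2) * Real.sqrt (2 * Real.pi)) ^ 2
        = (Real.pi ^ 2 / 2) ^ 2 := by
      rw [mul_pow, hA1, hA2]; ring
    calc (Real.pi / 2) ^ ((3:ℝ)/2) * Real.sqrt (2 * Real.pi)
        = Real.sqrt (((Real.pi / 2) ^ ((3:ℝ)/2) * Real.sqrt (2 * Real.pi)) ^ 2) :=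
          (Real.sqrt_sq hpos).symm
      _ = Real.sqrt ((Real.pi ^ 2 / 2) ^ 2) := by rw [hsq]
      _ = Real.pi ^ 2 / 2 := Real.sqrt_sq (by positivity)
  have hpi := Real.pi_pos
  rw [div_div, ← mul_div_assoc, hA]
  field_simp
  ring
end

section
/- Let A be a trace class self-adjoint operator on L²(ℝ³) with spectral decomposition A = ∑_k α_k |f_k⟩⟨f_k|, and set ρ(x) = ∑_k |α_k| |f_k(x)|². For r > 0 and z ∈ ℝ³, let χ be the multiplication operator by x ↦ exp(-|x-z|²/r²). Then ∑_k |α_k| ‖χ f_k‖²_{L²} = ∫₀¹ ∫_{B(z, r√(log(1/t))/√2)} ρ(x) dx dt ≤ C r³ ρ*(z), where ρ* is the Hardy–Littlewood maximal function of ρ and C > 0 is a universal constant. -/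
open MeasureTheory ComplexConjugate Set
open scoped ENNReal

lemma aux_set_eq (r : ℝ) (hr : 0 < r) (z : EuclideanSpace ℝ (Fin 3)) {t : ℝ}
    (ht0 : 0 < t) (ht1 : t < 1) :
    {x : EuclideanSpace ℝ (Fin 3) | t < Real.exp (-‖x - z‖ ^ 2 / r ^ 2) ^ 2} =
      Metric.ball z (r * Real.sqrt (Real.log (1 / t)) / Real.sqrt 2) := by
  have hL : 0 < Real.log (1 / t) := Real.log_pos (by rw [lt_div_iff₀ ht0]; linarith)
  have hlt : Real.log (1 / t) = -Real.log t := by rw [one_div, Real.log_inv]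
  set Rt := r * Real.sqrt (Real.log (1 / t)) / Real.sqrt 2 with hRt
  have hRtpos : 0 < Rt := by positivity
  have hRtsq : Rt ^ 2 = r ^ 2 * Real.log (1 / t) / 2 := by
    rw [hRt, div_pow, mul_pow, Real.sq_sqrt hL.le, Real.sq_sqrt (by norm_num : (0:ℝ) ≤ 2)]
  have hr2 : (0:ℝ) < r ^ 2 := by positivity
  ext x
  simp only [Set.mem_setOf_eq, Metric.mem_ball, dist_eq_norm]
  have hexp : Real.exp (-‖x - z‖ ^ 2 / r ^ 2) ^ 2
      = Real.exp (2 * (-‖x - z‖ ^ 2 / r ^ 2)) := by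
    rw [sq, ← Real.exp_add]; ring_nf
  rw [hexp, ← Real.log_lt_iff_lt_exp ht0]
  have hd : (0:ℝ) ≤ ‖x - z‖ := norm_nonneg _
  have e : 2 * (-‖x - z‖ ^ 2 / r ^ 2) = (-2 * ‖x - z‖ ^ 2) / r ^ 2 := by ring
  rw [e, lt_div_iff₀ hr2]
  constructor
  · intro h
    refine lt_of_pow_lt_pow_left₀ 2 hRtpos.le ?_
    rw [hRtsq, hlt]
    nlinarith
  · intro h
    have hd2 : ‖x - z‖ ^ 2 < Rt ^ 2 := pow_lt_pow_left₀ h hd (by norm_num)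
    rw [hRtsq, hlt] at hd2
    nlinarith

lemma aux_K_lt_top :
    (∫⁻ t in Set.Ioo (0:ℝ) 1, ENNReal.ofReal ((Real.sqrt (Real.log (1/t)))^3)) < ⊤ := by
  have hcomp : ∀ t ∈ Set.Ioo (0:ℝ) 1,
      (Real.sqrt (Real.log (1/t)))^3 ≤ 2 * Real.sqrt 2 * t ^ (-(3:ℝ)/4) := by
    intro t ht
    obtain ⟨ht0, ht1⟩ := ht
    have hu : (0:ℝ) < 1 / t := by positivity
    have hlog : Real.log (1/t) ≤ 2 * Real.sqrt (1/t) := by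
      have h1 : Real.log (1/t) = 2 * Real.log (Real.sqrt (1/t)) := by
        nth_rewrite 1 [← Real.sq_sqrt hu.le]
        rw [Real.log_pow]; norm_num
      have h2 : Real.log (Real.sqrt (1/t)) ≤ Real.sqrt (1/t) - 1 :=
        Real.log_le_sub_one_of_pos (Real.sqrt_pos.2 hu)
      linarith
    have step1 : (Real.sqrt (Real.log (1/t)))^3 ≤ (Real.sqrt (2 * Real.sqrt (1/t)))^3 :=
      pow_le_pow_left₀ (Real.sqrt_nonneg _) (Real.sqrt_le_sqrt hlog) 3
    refine step1.trans_eq ?_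
    have e1 : Real.sqrt (2 * Real.sqrt (1/t)) = Real.sqrt 2 * Real.sqrt (Real.sqrt (1/t)) :=
      Real.sqrt_mul (by norm_num) _
    rw [e1, mul_pow]
    have e2 : (Real.sqrt 2)^3 = 2 * Real.sqrt 2 := by
      rw [pow_succ, Real.sq_sqrt (by norm_num : (0:ℝ) ≤ 2)]
    rw [e2]
    congr 1
    -- (√√(1/t))^3 = t ^ (-3/4)
    have h4 : Real.sqrt (Real.sqrt (1/t)) = (1/t) ^ ((1:ℝ)/4) := by
      rw [Real.sqrt_eq_rpow, Real.sqrt_eq_rpow, ← Real.rpow_mul hu.le]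
      norm_num
    rw [h4, ← Real.rpow_natCast ((1/t) ^ ((1:ℝ)/4)) 3, ← Real.rpow_mul hu.le]
    rw [one_div, ← Real.rpow_neg_one t, ← Real.rpow_mul ht0.le]
    norm_num
  have hint : IntegrableOn (fun t : ℝ => 2 * Real.sqrt 2 * t ^ (-(3:ℝ)/4)) (Set.Ioo (0:ℝ) 1) := by
    have h1 : IntervalIntegrable (fun t : ℝ => t ^ (-(3:ℝ)/4)) volume 0 1 :=
      intervalIntegral.intervalIntegrable_rpow' (by norm_num)
    have h2 : IntegrableOn (fun t : ℝ => t ^ (-(3:ℝ)/4)) (Set.Ioc (0:ℝ) 1) := by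
      rwa [intervalIntegrable_iff_integrableOn_Ioc_of_le (by norm_num : (0:ℝ) ≤ 1)] at h1
    exact ((h2.mono_set Set.Ioo_subset_Ioc_self).const_mul _)
  calc (∫⁻ t in Set.Ioo (0:ℝ) 1, ENNReal.ofReal ((Real.sqrt (Real.log (1/t)))^3))
      ≤ ∫⁻ t in Set.Ioo (0:ℝ) 1, (‖2 * Real.sqrt 2 * t ^ (-(3:ℝ)/4)‖₊ : ENNReal) := by
        refine setLIntegral_mono_ae' measurableSet_Ioo (Filter.Eventually.of_forall ?_)
        intro t ht
        rw [← enorm_eq_nnnorm, Real.enorm_eq_ofReal_abs]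
        exact ENNReal.ofReal_le_ofReal ((hcomp t ht).trans (le_abs_self _))
    _ < ⊤ := hint.2



open MeasureTheory ComplexConjugate

/-- The Hardy–Littlewood maximal function of (the absolute value of) `ρ`, as a supremum
over all closed balls containing the point. -/
noncomputable def maxFn (ρ : EuclideanSpace ℝ (Fin 3) → ℝ) (z : EuclideanSpace ℝ (Fin 3)) :
    ENNReal :=
  ⨆ (c : EuclideanSpace ℝ (Fin 3)) (R : ℝ) (_ : 0 < R) (_ : z ∈ Metric.closedBall c R),
    (volume (Metric.closedBall c R))⁻¹ *
      ∫⁻ x in Metric.closedBall c R, ENNReal.ofReal |ρ x|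

/-- Layer-cake identity and maximal function bound for
`∑_k |α_k| ‖χ_{(r,z)} f_k‖²_{L²}`, where `χ_{(r,z)}(x) = exp(-|x-z|²/r²)`. -/
theorem stmt9 :
    ∃ C : ℝ, 0 < C ∧
      ∀ (α : ℕ → ℝ), (Summable fun k => |α k|) →
      ∀ (f : ℕ → EuclideanSpace ℝ (Fin 3) → ℂ),
        (∀ k, MemLp (f k) 2 (volume : Measure (EuclideanSpace ℝ (Fin 3)))) →
        (∀ j k, ∫ x, conj (f j x) * f k x = if j = k then (1 : ℂ) else 0) →
      ∀ (ρ : EuclideanSpace ℝ (Fin 3) → ℝ), (∀ x, ρ x = ∑' k, |α k| * ‖f k x‖ ^ 2) →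
      ∀ (r : ℝ), 0 < r → ∀ z : EuclideanSpace ℝ (Fin 3),
        (∑' k, |α k| * ∫ x, Real.exp (-‖x - z‖ ^ 2 / r ^ 2) ^ 2 * ‖f k x‖ ^ 2) =
            (∫ t in (0 : ℝ)..1,
              ∫ x in Metric.ball z (r * Real.sqrt (Real.log (1 / t)) / Real.sqrt 2), ρ x) ∧
          ENNReal.ofReal
              (∑' k, |α k| * ∫ x, Real.exp (-‖x - z‖ ^ 2 / r ^ 2) ^ 2 * ‖f k x‖ ^ 2) ≤
            ENNReal.ofReal C * ENNReal.ofReal (r ^ 3) * maxFn ρ z := by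
  classical
  set K : ℝ≥0∞ := ∫⁻ t in Set.Ioo (0:ℝ) 1, ENNReal.ofReal ((Real.sqrt (Real.log (1/t)))^3)
    with hK
  have hKfin : K < ⊤ := aux_K_lt_top
  set V : ℝ≥0∞ := volume (Metric.ball (0 : EuclideanSpace ℝ (Fin 3)) 1) with hV
  have hVfin : V < ⊤ := measure_ball_lt_top
  refine ⟨(V * K).toReal + 1, by positivity, ?_⟩
  have hCof : V * K ≤ ENNReal.ofReal ((V * K).toReal + 1) := by
    have hne : V * K ≠ ⊤ := (ENNReal.mul_lt_top hVfin hKfin).ne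
    calc V * K = ENNReal.ofReal ((V * K).toReal) := (ENNReal.ofReal_toReal hne).symm
      _ ≤ _ := ENNReal.ofReal_le_ofReal (by linarith [ENNReal.toReal_nonneg (a := V * K)])
  intro α hα f hf hortho ρ hρ r hr z
  set w : EuclideanSpace ℝ (Fin 3) → ℝ := fun x => Real.exp (-‖x - z‖ ^ 2 / r ^ 2) ^ 2 with hw
  set rad : ℝ → ℝ := fun t => r * Real.sqrt (Real.log (1 / t)) / Real.sqrt 2 with hrad
  -- basic facts
  have hfm : ∀ k, AEStronglyMeasurable (f k) volume := fun k => (hf k).1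
  have hsq_int : ∀ k, Integrable (fun x => ‖f k x‖ ^ 2) volume := fun k =>
    (hf k).norm.integrable_sq
  have h_norm1 : ∀ k, (∫ x, ‖f k x‖ ^ 2) = (1 : ℝ) := by
    intro k
    have h1 := hortho k k
    rw [if_pos rfl] at h1
    have h2 : ∀ u : ℂ, conj u * u = ((‖u‖ ^ 2 : ℝ) : ℂ) := by
      intro u
      rw [mul_comm, Complex.mul_conj]
      norm_cast
      rw [Complex.normSq_eq_norm_sq]
    simp_rw [h2] at h1
    have h3 : ((∫ x, ‖f k x‖ ^ 2 : ℝ) : ℂ) = 1 := by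
      rw [← h1]
      exact (integral_ofReal (𝕜 := ℂ)).symm
    exact_mod_cast h3
  have hw_cont : Continuous w := by
    apply Continuous.pow
    apply Real.continuous_exp.comp
    exact ((continuous_norm.comp (continuous_id.sub continuous_const)).pow 2).neg.div_const _
  have hw_nonneg : ∀ x, 0 ≤ w x := fun x => sq_nonneg _
  have hw_le_one : ∀ x, w x ≤ 1 := by
    intro x
    have h1 : Real.exp (-‖x - z‖ ^ 2 / r ^ 2) ≤ 1 := by
      rw [Real.exp_le_one_iff]
      apply div_nonpos_of_nonpos_of_nonneg
      · simp [sq_nonneg]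
      · positivity
    exact pow_le_one₀ (Real.exp_nonneg _) h1
  have hwf_int : ∀ k, Integrable (fun x => w x * ‖f k x‖ ^ 2) volume := by
    intro k
    refine (hsq_int k).bdd_mul hw_cont.aestronglyMeasurable (c := 1) (Filter.Eventually.of_forall fun x => ?_)
    rw [Real.norm_eq_abs, abs_of_nonneg (hw_nonneg x)]
    exact hw_le_one x
  have hI_nonneg : ∀ k, 0 ≤ ∫ x, w x * ‖f k x‖ ^ 2 := fun k =>
    integral_nonneg fun x => mul_nonneg (hw_nonneg x) (sq_nonneg _)
  have hI_le_one : ∀ k, (∫ x, w x * ‖f k x‖ ^ 2) ≤ 1 := by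
    intro k
    refine le_trans (integral_mono (hwf_int k) (hsq_int k) fun x => ?_) (h_norm1 k).le
    exact mul_le_of_le_one_left (sq_nonneg _) (hw_le_one x)
  have hterm_nonneg : ∀ k, 0 ≤ |α k| * ∫ x, w x * ‖f k x‖ ^ 2 := fun k =>
    mul_nonneg (abs_nonneg _) (hI_nonneg k)
  have hsummable : Summable (fun k => |α k| * ∫ x, w x * ‖f k x‖ ^ 2) :=
    Summable.of_nonneg_of_le hterm_nonneg
      (fun k => mul_le_of_le_one_right (abs_nonneg _) (hI_le_one k)) hα
  set S : ℝ := ∑' k, |α k| * ∫ x, w x * ‖f k x‖ ^ 2 with hS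
  have hS_nonneg : 0 ≤ S := tsum_nonneg hterm_nonneg
  -- ENNReal densities
  set G : ℕ → EuclideanSpace ℝ (Fin 3) → ℝ≥0∞ :=
    fun k x => ENNReal.ofReal (|α k| * ‖f k x‖ ^ 2) with hG
  set R : EuclideanSpace ℝ (Fin 3) → ℝ≥0∞ := fun x => ∑' k, G k x with hR
  have hGm : ∀ k, AEMeasurable (G k) volume := by
    intro k
    exact ENNReal.measurable_ofReal.comp_aemeasurable
      ((((hfm k).norm.aemeasurable).pow_const 2).const_mul _)
  have hR_meas : AEMeasurable R volume := AEMeasurable.ennreal_tsum hGm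
  have hGk_lint : ∀ k, ∫⁻ x, G k x = ENNReal.ofReal |α k| := by
    intro k
    rw [← ofReal_integral_eq_lintegral_ofReal ((hsq_int k).const_mul _)
        (Filter.Eventually.of_forall fun x => mul_nonneg (abs_nonneg _) (sq_nonneg _))]
    rw [integral_const_mul, h_norm1 k, mul_one]
  have hR_lint : ∫⁻ x, R x = ENNReal.ofReal (∑' k, |α k|) := by
    rw [hR]
    rw [lintegral_tsum hGm]
    simp_rw [hGk_lint]
    exact (ENNReal.ofReal_tsum_of_nonneg (fun k => abs_nonneg _) hα).symm
  have hR_lint_ne : ∫⁻ x, R x ≠ ⊤ := by rw [hR_lint]; exact ENNReal.ofReal_ne_top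
  have hR_lt_top : ∀ᵐ x : EuclideanSpace ℝ (Fin 3), R x < ⊤ := ae_lt_top' hR_meas hR_lint_ne
  have hρ_nonneg : ∀ x, 0 ≤ ρ x := fun x => (hρ x) ▸
    tsum_nonneg (fun k => mul_nonneg (abs_nonneg _) (sq_nonneg _))
  have hρR : ∀ᵐ x : EuclideanSpace ℝ (Fin 3), ENNReal.ofReal (ρ x) = R x := by
    filter_upwards [hR_lt_top] with x hx
    have h1 : ρ x = (R x).toReal := by
      rw [hρ x, hR, ENNReal.tsum_toReal_eq (fun k => ENNReal.ofReal_ne_top)]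
      congr 1
      funext k
      exact (ENNReal.toReal_ofReal (mul_nonneg (abs_nonneg _) (sq_nonneg _))).symm
    rw [h1, ENNReal.ofReal_toReal hx.ne]
  have hρtoReal : ∀ᵐ x : EuclideanSpace ℝ (Fin 3), ρ x = (R x).toReal := by
    filter_upwards [hρR, hR_lt_top] with x h1 h2
    rw [← h1, ENNReal.toReal_ofReal (hρ_nonneg x)]
  have hρ_int : Integrable ρ volume := by
    refine (integrable_toReal_of_lintegral_ne_top hR_meas hR_lint_ne).congr ?_
    filter_upwards [hρtoReal] with x h1
    exact h1.symm
  -- Step 1: ofReal S = ∫⁻ ofReal (w x) * R x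
  have key1 : ENNReal.ofReal S = ∫⁻ x, ENNReal.ofReal (w x) * R x := by
    rw [hS, ENNReal.ofReal_tsum_of_nonneg hterm_nonneg hsummable]
    have e1 : ∀ k, ENNReal.ofReal (|α k| * ∫ x, w x * ‖f k x‖ ^ 2)
        = ∫⁻ x, ENNReal.ofReal (w x) * G k x := by
      intro k
      rw [← integral_const_mul]
      rw [ofReal_integral_eq_lintegral_ofReal ((hwf_int k).const_mul _)
        (Filter.Eventually.of_forall fun x =>
          mul_nonneg (abs_nonneg _) (mul_nonneg (hw_nonneg x) (sq_nonneg _)))]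
      refine lintegral_congr fun x => ?_
      rw [show |α k| * (w x * ‖f k x‖ ^ 2) = w x * (|α k| * ‖f k x‖ ^ 2) by ring,
        ENNReal.ofReal_mul (hw_nonneg x)]
    simp_rw [e1]
    rw [← lintegral_tsum (f := fun k x => ENNReal.ofReal (w x) * G k x) fun k =>
      (hw_cont.measurable.ennreal_ofReal.aemeasurable.mul (hGm k))]
    refine lintegral_congr fun x => ?_
    rw [hR, ENNReal.tsum_mul_left]
  -- Step 2: withDensity and layer cake
  set μ : Measure (EuclideanSpace ℝ (Fin 3)) := volume.withDensity R with hμ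
  have key2 : (∫⁻ x, ENNReal.ofReal (w x) * R x) = ∫⁻ x, ENNReal.ofReal (w x) ∂μ := by
    rw [hμ, lintegral_withDensity_eq_lintegral_mul₀ hR_meas
      (hw_cont.measurable.ennreal_ofReal).aemeasurable]
    exact lintegral_congr fun x => (mul_comm _ _)
  have key3 : (∫⁻ x, ENNReal.ofReal (w x) ∂μ) = ∫⁻ t in Set.Ioi (0:ℝ), μ {x | t < w x} :=
    lintegral_eq_lintegral_meas_lt μ (Filter.Eventually.of_forall hw_nonneg)
      hw_cont.measurable.aemeasurable
  have key4 : (∫⁻ t in Set.Ioi (0:ℝ), μ {x | t < w x})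
      = ∫⁻ t in Set.Ioo (0:ℝ) 1, μ {x | t < w x} := by
    rw [← Set.Ioo_union_Ici_eq_Ioi (zero_lt_one : (0:ℝ) < 1),
      lintegral_union measurableSet_Ici
        (Set.disjoint_left.2 fun t ht1 ht2 => absurd ht2 (not_le.2 ht1.2))]
    have hzero : (∫⁻ t in Set.Ici (1:ℝ), μ {x | t < w x}) = 0 := by
      have : ∀ t ∈ Set.Ici (1:ℝ), μ {x | t < w x} = 0 := by
        intro t ht
        convert measure_empty (μ := μ)
        ext x
        simp only [Set.mem_setOf_eq, Set.mem_empty_iff_false, iff_false, not_lt]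
        exact (hw_le_one x).trans ht
      rw [setLIntegral_congr_fun measurableSet_Ici this]
      simp
    rw [hzero, add_zero]
  have key5 : (∫⁻ t in Set.Ioo (0:ℝ) 1, μ {x | t < w x})
      = ∫⁻ t in Set.Ioo (0:ℝ) 1, ∫⁻ x in Metric.ball z (rad t), R x := by
    refine setLIntegral_congr_fun measurableSet_Ioo ?_
    intro t ht
    beta_reduce
    rw [hμ, show {x | t < w x} = Metric.ball z (rad t) from aux_set_eq r hr z ht.1 ht.2,
      withDensity_apply _ measurableSet_ball]
  have keyS : ENNReal.ofReal S
      = ∫⁻ t in Set.Ioo (0:ℝ) 1, ∫⁻ x in Metric.ball z (rad t), R x := by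
    rw [key1, key2, key3, key4, key5]
  -- identity part
  have hball_fin : ∀ s : Set (EuclideanSpace ℝ (Fin 3)), (∫⁻ x in s, R x) ≠ ⊤ :=
    fun s => ((setLIntegral_le_lintegral s R).trans_lt hR_lint_ne.lt_top).ne
  have hball : ∀ t : ℝ, ENNReal.ofReal (∫ x in Metric.ball z (rad t), ρ x)
      = ∫⁻ x in Metric.ball z (rad t), R x := by
    intro t
    have h1 : (∫ x in Metric.ball z (rad t), ρ x)
        = ∫ x in Metric.ball z (rad t), (R x).toReal :=
      integral_congr_ae (ae_restrict_of_ae hρtoReal)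
    rw [h1, integral_toReal hR_meas.restrict (ae_restrict_of_ae hR_lt_top),
      ENNReal.ofReal_toReal (hball_fin _)]
  set F : ℝ → ℝ := fun t => ∫ x in Metric.ball z (rad t), ρ x with hF
  have hF_nonneg : ∀ t, 0 ≤ F t := fun t =>
    setIntegral_nonneg measurableSet_ball fun x _ => hρ_nonneg x
  have hrad_anti : ∀ s t : ℝ, 0 < s → s ≤ t → rad t ≤ rad s := by
    intro s t hs hst
    show r * Real.sqrt (Real.log (1 / t)) / Real.sqrt 2
        ≤ r * Real.sqrt (Real.log (1 / s)) / Real.sqrt 2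
    have h1 : Real.sqrt (Real.log (1 / t)) ≤ Real.sqrt (Real.log (1 / s)) := by
      apply Real.sqrt_le_sqrt
      rw [Real.log_le_log_iff (one_div_pos.2 (hs.trans_le hst)) (one_div_pos.2 hs)]
      exact one_div_le_one_div_of_le hs hst
    gcongr
  have hF_anti : ∀ s t : ℝ, 0 < s → s ≤ t → F t ≤ F s := by
    intro s t hs hst
    refine setIntegral_mono_set hρ_int.integrableOn
      (Filter.Eventually.of_forall fun x => hρ_nonneg x)
      (HasSubset.Subset.eventuallyLE (Metric.ball_subset_ball (hrad_anti s t hs hst)))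
  set Fb : ℝ → ℝ := fun t => if t ≤ 0 then ∫ x, ρ x else F t with hFb
  have hFb_anti : Antitone Fb := by
    intro s t hst
    simp only [hFb]
    by_cases ht : t ≤ 0
    · rw [if_pos ht, if_pos (hst.trans ht)]
    · rw [if_neg ht]
      push_neg at ht
      by_cases hs : s ≤ 0
      · rw [if_pos hs]
        exact setIntegral_le_integral hρ_int (Filter.Eventually.of_forall hρ_nonneg)
      · rw [if_neg hs]
        push_neg at hs
        exact hF_anti s t hs hst
  have hFmeas : AEMeasurable F (volume.restrict (Set.Ioc (0:ℝ) 1)) := by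
    refine hFb_anti.measurable.aemeasurable.congr ?_
    rw [Filter.EventuallyEq, ae_restrict_iff' measurableSet_Ioc]
    refine Filter.Eventually.of_forall fun t ht => ?_
    simp only [hFb]
    rw [if_neg (not_le.2 ht.1)]
  have hIoc : (∫⁻ t in Set.Ioc (0:ℝ) 1, ENNReal.ofReal (F t))
      = ∫⁻ t in Set.Ioo (0:ℝ) 1, ∫⁻ x in Metric.ball z (rad t), R x := by
    rw [← Measure.restrict_congr_set Ioo_ae_eq_Ioc]
    exact setLIntegral_congr_fun measurableSet_Ioo
      (fun t _ => hball t)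
  have hFint : (∫ t in Set.Ioc (0:ℝ) 1, F t) = S := by
    rw [integral_eq_lintegral_of_nonneg_ae (Filter.Eventually.of_forall hF_nonneg)
      hFmeas.aestronglyMeasurable]
    rw [hIoc, ← keyS, ENNReal.toReal_ofReal hS_nonneg]
  have hidentity : S = ∫ t in (0:ℝ)..1, F t := by
    rw [intervalIntegral.integral_of_le (zero_le_one), ← hFint]
  constructor
  · exact hidentity
  -- bound part
  · have hb : ∀ t ∈ Set.Ioo (0:ℝ) 1, (∫⁻ x in Metric.ball z (rad t), R x)
        ≤ ENNReal.ofReal ((Real.sqrt (Real.log (1/t)))^3)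
            * (ENNReal.ofReal (r^3) * V * maxFn ρ z) := by
      intro t ht
      have hL : 0 < Real.log (1 / t) := Real.log_pos (by rw [lt_div_iff₀ ht.1]; linarith [ht.2])
      have hradpos : 0 < rad t := by rw [hrad]; positivity
      have hvol_ne : volume (Metric.closedBall z (rad t)) ≠ 0 :=
        (Metric.measure_closedBall_pos volume z hradpos).ne'
      have hvol_fin : volume (Metric.closedBall z (rad t)) ≠ ⊤ :=
        measure_closedBall_lt_top.ne
      calc (∫⁻ x in Metric.ball z (rad t), R x)
          ≤ ∫⁻ x in Metric.closedBall z (rad t), R x :=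
            lintegral_mono_set Metric.ball_subset_closedBall
        _ = ∫⁻ x in Metric.closedBall z (rad t), ENNReal.ofReal |ρ x| := by
            refine lintegral_congr_ae (ae_restrict_of_ae ?_)
            filter_upwards [hρR] with x hx
            rw [abs_of_nonneg (hρ_nonneg x), hx]
        _ ≤ volume (Metric.closedBall z (rad t)) * maxFn ρ z := by
            have h1 : (volume (Metric.closedBall z (rad t)))⁻¹
                * (∫⁻ x in Metric.closedBall z (rad t), ENNReal.ofReal |ρ x|)
                ≤ maxFn ρ z := by
              refine le_iSup_of_le z (le_iSup_of_le (rad t) ?_)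
              exact le_iSup_of_le hradpos
                (le_iSup_of_le (Metric.mem_closedBall_self hradpos.le) le_rfl)
            calc (∫⁻ x in Metric.closedBall z (rad t), ENNReal.ofReal |ρ x|)
                = volume (Metric.closedBall z (rad t))
                  * ((volume (Metric.closedBall z (rad t)))⁻¹
                    * ∫⁻ x in Metric.closedBall z (rad t), ENNReal.ofReal |ρ x|) := by
                  rw [← mul_assoc, ENNReal.mul_inv_cancel hvol_ne hvol_fin, one_mul]
              _ ≤ _ := mul_le_mul_right h1 _
        _ = ENNReal.ofReal ((rad t)^3) * V * maxFn ρ z := by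
            rw [hV, Measure.addHaar_closedBall volume z hradpos.le, finrank_euclideanSpace_fin]
        _ ≤ ENNReal.ofReal ((Real.sqrt (Real.log (1/t)))^3)
            * (ENNReal.ofReal (r^3) * V * maxFn ρ z) := by
            have hrs : rad t ≤ r * Real.sqrt (Real.log (1/t)) := by
              show r * Real.sqrt (Real.log (1/t)) / Real.sqrt 2
                  ≤ r * Real.sqrt (Real.log (1/t))
              apply div_le_self (by positivity)
              rw [show (1:ℝ) = Real.sqrt 1 from Real.sqrt_one.symm]
              exact Real.sqrt_le_sqrt (by norm_num)
            have h3 : (rad t)^3 ≤ (Real.sqrt (Real.log (1/t)))^3 * r^3 := by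
              calc (rad t)^3 ≤ (r * Real.sqrt (Real.log (1/t)))^3 :=
                    pow_le_pow_left₀ hradpos.le hrs 3
                _ = (Real.sqrt (Real.log (1/t)))^3 * r^3 := by ring
            calc ENNReal.ofReal ((rad t)^3) * V * maxFn ρ z
              ≤ ENNReal.ofReal ((Real.sqrt (Real.log (1/t)))^3 * r^3) * V * maxFn ρ z :=
                  mul_le_mul_left (mul_le_mul_left (ENNReal.ofReal_le_ofReal h3) V) _
              _ = ENNReal.ofReal ((Real.sqrt (Real.log (1/t)))^3)
                  * (ENNReal.ofReal (r^3) * V * maxFn ρ z) := by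
                  rw [ENNReal.ofReal_mul (by positivity)]; ring
    calc ENNReal.ofReal S
        ≤ ∫⁻ t in Set.Ioo (0:ℝ) 1, ENNReal.ofReal ((Real.sqrt (Real.log (1/t)))^3)
            * (ENNReal.ofReal (r^3) * V * maxFn ρ z) := by
          rw [keyS]
          exact setLIntegral_mono_ae' measurableSet_Ioo (Filter.Eventually.of_forall hb)
      _ = K * (ENNReal.ofReal (r^3) * V * maxFn ρ z) := by
          rw [hK]
          have hmK : Measurable fun t : ℝ => ENNReal.ofReal ((Real.sqrt (Real.log (1/t)))^3) :=
            (((Real.measurable_log.comp (measurable_const.div measurable_id)).sqrt).pow_const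
              3).ennreal_ofReal
          exact lintegral_mul_const'' _ hmK.aemeasurable
      _ = (V * K) * (ENNReal.ofReal (r ^ 3) * maxFn ρ z) := by ring
      _ ≤ ENNReal.ofReal ((V * K).toReal + 1) * (ENNReal.ofReal (r ^ 3) * maxFn ρ z) :=
          mul_le_mul_left hCof _
      _ = ENNReal.ofReal ((V * K).toReal + 1) * ENNReal.ofReal (r ^ 3) * maxFn ρ z := by
          ring
end
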